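/- Let Q be a quiver with finitely many vertices such that all singular vertices lie in Q'⁰ ⊆ Q⁰ and every cycle meets Q'⁰, and suppose Q'⁰ = {v₁,…,v_m}. Let e = v₁ + ⋯ + v_m ∈ L_k(Q). Then e is a full idempotent: L_k(Q) e L_k(Q) = L_k(Q). -/

import Mathlib

structure Qvr where
  V : Type
  E : Type
  s : E → V
  r : E → V

namespace Qvr

variable (Q : Qvr)

/-- A finite list of edges is a path if consecutive edges are composable. -/
def IsPath (μ : List Q.E) : Prop :=
  μ.Chain' (fun e f => Q.r e = Q.s f)

/-- The source of a nonempty path. -/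
def pathSrc (μ : List Q.E) (h : μ ≠ []) : Q.V :=
  Q.s (μ.head h)

/-- The range of a nonempty path. -/
def pathRng (μ : List Q.E) (h : μ ≠ []) : Q.V :=
  Q.r (μ.getLast h)

/-- A cycle is a nonempty closed path with pairwise distinct sources of its edges. -/
def IsCycle (μ : List Q.E) : Prop :=
  ∃ h : μ ≠ [], Q.IsPath μ ∧ Q.pathRng μ h = Q.pathSrc μ h ∧ (μ.map Q.s).Nodup

/-- Every cycle of `Q` passes through a vertex of `W`. -/
def CyclesMeet (W : Set Q.V) : Prop :=
  ∀ μ : List Q.E, Q.IsCycle μ → ∃ e ∈ μ, Q.s e ∈ W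

/-- A sink is a vertex emitting no edges. -/
def IsSink (v : Q.V) : Prop := ∀ e : Q.E, Q.s e ≠ v

/-- A regular vertex emits at least one and only finitely many edges. -/
def IsRegular (v : Q.V) : Prop :=
  {e : Q.E | Q.s e = v}.Nonempty ∧ {e : Q.E | Q.s e = v}.Finite

end Qvr

/-- Generators of the Leavitt path algebra: vertices, edges and ghost edges. -/
inductive LGen (Q : Qvr) : Type
  | vert : Q.V → LGen Q
  | edge : Q.E → LGen Q
  | ghost : Q.E → LGen Q

/-- The canonical generators inside the free algebra. -/
def lgen (k : Type) [Field k] (Q : Qvr) (x : LGen Q) : FreeAlgebra k (LGen Q) :=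
  FreeAlgebra.ι k x

/-- The defining relations of the Leavitt path algebra of a quiver with finitely many
vertices: the vertices are pairwise orthogonal idempotents summing to `1`, together with
the path algebra relations and the Cuntz–Krieger relations (CK-2 imposed at regular
vertices). -/
inductive LRel (k : Type) [Field k] (Q : Qvr) [Fintype Q.V] :
    FreeAlgebra k (LGen Q) → FreeAlgebra k (LGen Q) → Prop
  | orth (v w : Q.V) (h : v ≠ w) :
      LRel k Q (lgen k Q (.vert v) * lgen k Q (.vert w)) 0
  | idem (v : Q.V) :
      LRel k Q (lgen k Q (.vert v) * lgen k Q (.vert v)) (lgen k Q (.vert v))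
  | src_edge (e : Q.E) :
      LRel k Q (lgen k Q (.vert (Q.s e)) * lgen k Q (.edge e)) (lgen k Q (.edge e))
  | edge_rng (e : Q.E) :
      LRel k Q (lgen k Q (.edge e) * lgen k Q (.vert (Q.r e))) (lgen k Q (.edge e))
  | rng_ghost (e : Q.E) :
      LRel k Q (lgen k Q (.vert (Q.r e)) * lgen k Q (.ghost e)) (lgen k Q (.ghost e))
  | ghost_src (e : Q.E) :
      LRel k Q (lgen k Q (.ghost e) * lgen k Q (.vert (Q.s e))) (lgen k Q (.ghost e))
  | ck1_eq (e : Q.E) :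
      LRel k Q (lgen k Q (.ghost e) * lgen k Q (.edge e)) (lgen k Q (.vert (Q.r e)))
  | ck1_ne (e f : Q.E) (h : e ≠ f) :
      LRel k Q (lgen k Q (.ghost e) * lgen k Q (.edge f)) 0
  | ck2 (v : Q.V) (h : {e : Q.E | Q.s e = v}.Finite) (hne : {e : Q.E | Q.s e = v}.Nonempty) :
      LRel k Q (lgen k Q (.vert v)) (∑ e ∈ h.toFinset, lgen k Q (.edge e) * lgen k Q (.ghost e))
  | unit : LRel k Q 1 (∑ v : Q.V, lgen k Q (.vert v))

/-- The Leavitt path algebra of `Q` with coefficients in `k`. -/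
def LPA (k : Type) [Field k] (Q : Qvr) [Fintype Q.V] : Type :=
  RingQuot (LRel k Q)

noncomputable instance (k : Type) [Field k] (Q : Qvr) [Fintype Q.V] : Ring (LPA k Q) :=
  inferInstanceAs (Ring (RingQuot (LRel k Q)))

noncomputable instance (k : Type) [Field k] (Q : Qvr) [Fintype Q.V] : Algebra k (LPA k Q) :=
  inferInstanceAs (Algebra k (RingQuot (LRel k Q)))

/-- The vertex idempotent `v ∈ L_k(Q)`. -/
noncomputable def lv (k : Type) [Field k] (Q : Qvr) [Fintype Q.V] (v : Q.V) : LPA k Q :=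
  RingQuot.mkAlgHom k (LRel k Q) (lgen k Q (.vert v))

/-- The edge generator `e ∈ L_k(Q)`. -/
noncomputable def le (k : Type) [Field k] (Q : Qvr) [Fintype Q.V] (e : Q.E) : LPA k Q :=
  RingQuot.mkAlgHom k (LRel k Q) (lgen k Q (.edge e))

/-- The ghost edge generator `e* ∈ L_k(Q)`. -/
noncomputable def lg (k : Type) [Field k] (Q : Qvr) [Fintype Q.V] (e : Q.E) : LPA k Q :=
  RingQuot.mkAlgHom k (LRel k Q) (lgen k Q (.ghost e))

set_option linter.unusedSectionVars false

section Graph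

variable (Q : Qvr)

lemma chain_step (μ : List Q.E) (hp : Q.IsPath μ) (j : ℕ) (hj : j + 1 < μ.length) :
    Q.r (μ[j]'(by omega)) = Q.s (μ[j+1]'hj) := by
  simp only [Qvr.IsPath, List.Chain'] at hp; rw [List.isChain_iff_getElem] at hp
  exact hp j (by omega)

/-- Any nonempty closed path contains a cycle whose edges come from the path. -/
lemma exists_cycle_of_closed :
    ∀ (n : ℕ) (μ : List Q.E) (h : μ ≠ []), μ.length ≤ n → Q.IsPath μ →
      Q.pathRng μ h = Q.pathSrc μ h →
      ∃ ν : List Q.E, (∀ e ∈ ν, e ∈ μ) ∧ Q.IsCycle ν := by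
  intro n
  induction n with
  | zero =>
    intro μ h hlen
    exact absurd (List.length_eq_zero_iff.mp (Nat.le_zero.mp hlen)) h
  | succ n ih =>
    intro μ h hlen hp hclosed
    by_cases hnd : (μ.map Q.s).Nodup
    · exact ⟨μ, fun e he => he, h, hp, hclosed, hnd⟩
    · rw [List.nodup_iff_injective_get] at hnd
      rw [Function.not_injective_iff] at hnd
      obtain ⟨i, j, hget, hij⟩ := hnd
      -- wlog i < j
      obtain ⟨i, j, hij, hget⟩ : ∃ i j : Fin (μ.map Q.s).length,
          (i : ℕ) < j ∧ (μ.map Q.s).get i = (μ.map Q.s).get j := by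
        rcases lt_or_gt_of_ne hij with hl | hl
        · exact ⟨i, j, hl, hget⟩
        · exact ⟨j, i, hl, hget.symm⟩
      have hjlen : (j : ℕ) < μ.length := by
        have := j.isLt; simpa using this
      have hilen : (i : ℕ) < μ.length := lt_trans (by exact_mod_cast hij) hjlen
      have hsij : Q.s (μ[(i:ℕ)]'hilen) = Q.s (μ[(j:ℕ)]'hjlen) := by
        simpa [List.get_eq_getElem] using hget
      set ν : List Q.E := (μ.drop i).take (j - i) with hν
      have hνlen : ν.length = j - i := by
        simp [hν, List.length_take, List.length_drop]
        omega
      have hνne : ν ≠ [] := by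
        intro hnil
        rw [hnil] at hνlen
        simp at hνlen
        omega
      have hνget : ∀ (t : ℕ) (ht : t < ν.length), ν[t]'ht = μ[(i:ℕ)+t]'(by omega) := by
        intro t ht
        simp [hν, List.getElem_take, List.getElem_drop]
      have hνsub : ν.Sublist μ := ((List.take_sublist _ _).trans (List.drop_sublist _ _))
      have hνpath : Q.IsPath ν := (hp.drop _).take _
      have hνclosed : Q.pathRng ν hνne = Q.pathSrc ν hνne := by
        rw [Qvr.pathRng, Qvr.pathSrc, List.getLast_eq_getElem, List.head_eq_getElem]
        rw [hνget 0 (by omega), hνget (ν.length - 1) (by omega)]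
        have h1 : (i:ℕ) + (ν.length - 1) + 1 = j := by omega
        have : Q.r (μ[(i:ℕ) + (ν.length - 1)]'(by omega)) = Q.s (μ[(i:ℕ) + (ν.length-1) + 1]'(by omega)) :=
          chain_step Q μ hp _ (by omega)
        rw [this]
        simp only [Nat.add_zero, h1]
        exact hsij.symm
      obtain ⟨ρ, hρ1, hρ2⟩ := ih ν hνne (by omega) hνpath hνclosed
      exact ⟨ρ, fun e he => List.Sublist.mem (hρ1 e he) hνsub, hρ2⟩

variable (W : Set Q.V)

/-- No closed path avoiding `W` exists when every cycle meets `W`. -/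
lemma no_closed_avoiding (hcyc : Q.CyclesMeet W) (μ : List Q.E) (h : μ ≠ [])
    (hp : Q.IsPath μ) (hclosed : Q.pathRng μ h = Q.pathSrc μ h)
    (hW : ∀ e ∈ μ, Q.s e ∉ W) : False := by
  obtain ⟨ν, hν1, hν2⟩ := exists_cycle_of_closed Q μ.length μ h le_rfl hp hclosed
  obtain ⟨f, hf, hfW⟩ := hcyc ν hν2
  exact hW f (hν1 f hf) hfW

/-- Vertices reachable from `v` along paths avoiding `W`. -/
def ReachSet (v : Q.V) : Set Q.V :=
  insert v {w | ∃ (μ : List Q.E) (h : μ ≠ []), Q.IsPath μ ∧ (∀ e ∈ μ, Q.s e ∉ W) ∧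
    Q.pathSrc μ h = v ∧ Q.pathRng μ h = w}

variable [Fintype Q.V]

noncomputable def reachCard (v : Q.V) : ℕ :=
  (Set.toFinite (ReachSet Q W v)).toFinset.card

lemma reach_lt (hcyc : Q.CyclesMeet W) (e : Q.E) (hv : Q.s e ∉ W) (hr : Q.r e ∉ W) :
    reachCard Q W (Q.r e) < reachCard Q W (Q.s e) := by
  apply Finset.card_lt_card
  rw [Set.Finite.toFinset_ssubset_toFinset]
  constructor
  · -- subset
    intro w hw
    rcases hw with rfl | ⟨μ, hne, hp, hW, hsrc, hrng⟩
    · -- w = r e : path [e]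
      refine Or.inr ⟨[e], by simp, ?_, ?_, ?_, ?_⟩
      · simp [Qvr.IsPath, List.Chain']
      · simpa using hv
      · rfl
      · rfl
    · refine Or.inr ⟨e :: μ, by simp, ?_, ?_, rfl, ?_⟩
      · simp only [Qvr.IsPath, List.Chain']; rw [List.isChain_cons]
        refine ⟨?_, hp⟩
        intro y hy
        rw [List.head?_eq_head hne] at hy
        cases hy
        exact hsrc.symm
      · intro f hf
        rcases List.mem_cons.mp hf with rfl | hf
        · exact hv
        · exact hW f hf
      · rw [Qvr.pathRng, List.getLast_cons hne]
        exact hrng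
  · -- not superset: s e ∈ ReachSet (s e) but not in ReachSet (r e)
    intro hsub
    have hmem : Q.s e ∈ ReachSet Q W (Q.r e) := hsub (Or.inl rfl)
    -- build a closed path from s e to s e avoiding W
    rcases hmem with heq | ⟨μ, hne, hp, hW, hsrc, hrng⟩
    · -- r e = s e : loop [e]
      exact no_closed_avoiding Q W hcyc [e] (by simp) (by simp [Qvr.IsPath, List.Chain'])
        (by simp [Qvr.pathRng, Qvr.pathSrc, heq]) (by simpa using hv)
    · refine no_closed_avoiding Q W hcyc (e :: μ) (by simp) ?_ ?_ ?_
      · simp only [Qvr.IsPath, List.Chain']; rw [List.isChain_cons]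
        refine ⟨?_, hp⟩
        intro y hy
        rw [List.head?_eq_head hne] at hy
        cases hy
        exact hsrc.symm
      · rw [Qvr.pathRng, List.getLast_cons hne, Qvr.pathSrc]
        simpa [Qvr.pathRng] using hrng
      · intro f hf
        rcases List.mem_cons.mp hf with rfl | hf
        · exact hv
        · exact hW f hf

lemma self_mem_reach (v : Q.V) : v ∈ ReachSet Q W v := Or.inl rfl

end Graph


section Alg

variable (k : Type) [Field k] (Q : Qvr) [Fintype Q.V]

lemma lv_mul_self (v : Q.V) : lv k Q v * lv k Q v = lv k Q v := by
  have h := RingQuot.mkAlgHom_rel k (s := LRel k Q) (LRel.idem v)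
  rw [map_mul] at h
  exact h

lemma lv_mul_ne (v w : Q.V) (h : v ≠ w) : lv k Q v * lv k Q w = 0 := by
  have h2 := RingQuot.mkAlgHom_rel k (s := LRel k Q) (LRel.orth v w h)
  rw [map_mul, map_zero] at h2
  exact h2

lemma one_eq_sum : (1 : LPA k Q) = ∑ v : Q.V, lv k Q v := by
  have h := RingQuot.mkAlgHom_rel k (s := LRel k Q) LRel.unit
  rw [map_one, map_sum] at h
  exact h

lemma le_mul_lv (e : Q.E) : le k Q e * lv k Q (Q.r e) = le k Q e := by
  have h := RingQuot.mkAlgHom_rel k (s := LRel k Q) (LRel.edge_rng e)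
  rw [map_mul] at h
  exact h

lemma lv_ck2 (v : Q.V) (hf : {e : Q.E | Q.s e = v}.Finite)
    (hne : {e : Q.E | Q.s e = v}.Nonempty) :
    lv k Q v = ∑ e ∈ hf.toFinset, le k Q e * lg k Q e := by
  have h := RingQuot.mkAlgHom_rel k (s := LRel k Q) (LRel.ck2 v hf hne)
  rw [map_sum] at h
  simp only [map_mul] at h
  exact h

variable (W : Set Q.V)

/-- Membership in the two-sided ideal generated by `∑_{v ∈ W} v`, in explicit form. -/
def Mem18 (x : LPA k Q) : Prop :=
  ∃ (n : ℕ) (a b : Fin n → LPA k Q),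
    ∑ i : Fin n, a i * (∑ v ∈ (Set.toFinite W).toFinset, lv k Q v) * b i = x

lemma mem_zero : Mem18 k Q W 0 := ⟨0, (fun _ => 0), (fun _ => 0), by simp⟩

lemma mem_add {x y : LPA k Q} (hx : Mem18 k Q W x) (hy : Mem18 k Q W y) :
    Mem18 k Q W (x + y) := by
  obtain ⟨n, a, b, ha⟩ := hx
  obtain ⟨m, c, d, hc⟩ := hy
  refine ⟨n + m, Fin.append a c, Fin.append b d, ?_⟩
  rw [Fin.sum_univ_add]
  simp only [Fin.append_left, Fin.append_right, ha, hc]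

lemma mem_lmul (c : LPA k Q) {x : LPA k Q} (hx : Mem18 k Q W x) :
    Mem18 k Q W (c * x) := by
  obtain ⟨n, a, b, ha⟩ := hx
  refine ⟨n, fun i => c * a i, b, ?_⟩
  calc ∑ i : Fin n, c * a i * (∑ v ∈ (Set.toFinite W).toFinset, lv k Q v) * b i
      = c * ∑ i : Fin n, a i * (∑ v ∈ (Set.toFinite W).toFinset, lv k Q v) * b i := by
        rw [Finset.mul_sum]; simp [mul_assoc]
    _ = c * x := by rw [ha]

lemma mem_rmul (c : LPA k Q) {x : LPA k Q} (hx : Mem18 k Q W x) :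
    Mem18 k Q W (x * c) := by
  obtain ⟨n, a, b, ha⟩ := hx
  refine ⟨n, a, fun i => b i * c, ?_⟩
  calc ∑ i : Fin n, a i * (∑ v ∈ (Set.toFinite W).toFinset, lv k Q v) * (b i * c)
      = (∑ i : Fin n, a i * (∑ v ∈ (Set.toFinite W).toFinset, lv k Q v) * b i) * c := by
        rw [Finset.sum_mul]; simp [mul_assoc]
    _ = x * c := by rw [ha]

lemma mem_of_memW {v : Q.V} (hv : v ∈ W) : Mem18 k Q W (lv k Q v) := by
  have hE : lv k Q v * (∑ w ∈ (Set.toFinite W).toFinset, lv k Q w) = lv k Q v := by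
    rw [Finset.mul_sum]
    rw [Finset.sum_eq_single v
      (fun w _ hwv => lv_mul_ne k Q v w (Ne.symm hwv))
      (fun hvv => absurd ((Set.Finite.mem_toFinset _).mpr hv) hvv)]
    exact lv_mul_self k Q v
  refine ⟨1, fun _ => lv k Q v, fun _ => lv k Q v, ?_⟩
  rw [Fin.sum_univ_one, hE, lv_mul_self]

lemma key (hsing : ∀ v : Q.V, v ∉ W → Q.IsRegular v) (hcyc : Q.CyclesMeet W) :
    ∀ (n : ℕ) (v : Q.V), reachCard Q W v ≤ n → Mem18 k Q W (lv k Q v) := by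
  intro n
  induction n with
  | zero =>
    intro v hv
    have : 0 < reachCard Q W v :=
      Finset.card_pos.mpr ⟨v, (Set.Finite.mem_toFinset _).mpr (self_mem_reach Q W v)⟩
    omega
  | succ n ih =>
    intro v hv
    by_cases hvW : v ∈ W
    · exact mem_of_memW k Q W hvW
    · obtain ⟨hne, hf⟩ := hsing v hvW
      rw [lv_ck2 k Q v hf hne]
      refine Finset.sum_induction _ _ (fun a b => mem_add k Q W) (mem_zero k Q W) ?_
      intro e he
      have hse : Q.s e = v := by simpa using (Set.Finite.mem_toFinset hf).mp he
      have hmem : Mem18 k Q W (lv k Q (Q.r e)) := by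
        by_cases hrW : Q.r e ∈ W
        · exact mem_of_memW k Q W hrW
        · apply ih
          have hlt : reachCard Q W (Q.r e) < reachCard Q W (Q.s e) :=
            reach_lt Q W hcyc e (hse ▸ hvW) hrW
          rw [hse] at hlt
          omega
      have : le k Q e * lg k Q e = le k Q e * lv k Q (Q.r e) * lg k Q e := by
        rw [le_mul_lv]
      rw [this]
      exact mem_rmul k Q W _ (mem_lmul k Q W _ hmem)

end Alg


/-- Let `Q` have finitely many vertices, with all singular vertices in
`W ⊆ Q⁰` and every cycle meeting `W`.  Then `e = ∑_{v ∈ W} v` is a full idempotent of the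
Leavitt path algebra: `L_k(Q) e L_k(Q) = L_k(Q)`, i.e. `1` is a finite sum of elements
`a · e · b`. -/
theorem stmt18 (k : Type) [Field k] (Q : Qvr) [Fintype Q.V] (W : Set Q.V)
    (hsing : ∀ v : Q.V, v ∉ W → Q.IsRegular v) (hcyc : Q.CyclesMeet W) :
    ∃ (n : ℕ) (a b : Fin n → LPA k Q),
      ∑ i : Fin n, a i * (∑ v ∈ (Set.toFinite W).toFinset, lv k Q v) * b i = 1 := by
  have h1 : (1 : LPA k Q) = ∑ v : Q.V, lv k Q v := one_eq_sum k Q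
  have h2 : Mem18 k Q W (∑ v : Q.V, lv k Q v) :=
    Finset.sum_induction _ _ (fun a b => mem_add k Q W) (mem_zero k Q W)
      (fun v _ => key k Q W hsing hcyc (reachCard Q W v) v le_rfl)
  rw [← h1] at h2
  obtain ⟨n, a, b, h⟩ := h2
  exact ⟨n, a, b, h⟩
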